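/- Suppose (H1) and (H2) hold. Then for any φ in the profile set Γ, one has H(φ)(t) ≥ 0 for all t ∈ ℝ. -/

import Mathlib

open Real Filter

/-- The segment `u_t ∈ C([−τ,0],ℝ)` of a function `u : ℝ → ℝ`, `u_t(s) = u(t+s)`. -/
def seg (τ : ℝ) (u : ℝ → ℝ) (t : ℝ) : Set.Icc (-τ) (0 : ℝ) → ℝ :=
  fun s => u (t + s.1)

/-- Under (H1) and (H2), for any `φ` in the profile set `Γ`,
`H(φ)(t) = f(φ_t) + β φ(t) ≥ 0` for all `t`. -/
theorem H_nonneg_on_profile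
    (τ : ℝ) (hτ : 0 < τ)
    (f : (Set.Icc (-τ) (0 : ℝ) → ℝ) → ℝ)
    (hf : Continuous fun φ : C(Set.Icc (-τ) (0 : ℝ), ℝ) => f ⇑φ)
    (K : ℝ) (hK : 0 < K)
    -- (H1)
    (hH1₀ : f (fun _ => (0 : ℝ)) = 0) (hH1K : f (fun _ => K) = 0)
    (hH1ne : ∀ u : ℝ, 0 < u → u < K → f (fun _ => u) ≠ 0)
    (β : ℝ) (hβ : 0 ≤ β)
    -- (H2)
    (hH2 : ∀ φ ψ : Set.Icc (-τ) (0 : ℝ) → ℝ, Continuous φ → Continuous ψ →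
      (∀ s, 0 ≤ ψ s ∧ ψ s ≤ φ s ∧ φ s ≤ K) →
      Monotone (fun s : Set.Icc (-τ) (0 : ℝ) => Real.exp (β * s.1) * (φ s - ψ s)) →
      0 ≤ f φ - f ψ +
        β * (φ ⟨0, Set.right_mem_Icc.mpr (neg_nonpos.mpr hτ.le)⟩ -
             ψ ⟨0, Set.right_mem_Icc.mpr (neg_nonpos.mpr hτ.le)⟩))
    -- φ ∈ Γ
    (φ : ℝ → ℝ) (hφc : Continuous φ) (hφm : Monotone φ)
    (hφ₀ : Tendsto φ atBot (nhds 0)) (hφK : Tendsto φ atTop (nhds K))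
    (hφΓ : ∀ s : ℝ, 0 < s →
      Monotone fun t : ℝ => Real.exp (β * t) * (φ (t + s) - φ t)) :
    ∀ t : ℝ, 0 ≤ f (seg τ φ t) + β * φ t := by
  intro t
  have hφ0 : ∀ x, 0 ≤ φ x := fun x =>
    le_of_tendsto hφ₀ (eventually_atBot.mpr ⟨x, fun y hy => hφm hy⟩)
  have hφKb : ∀ x, φ x ≤ K := fun x =>
    ge_of_tendsto hφK (eventually_atTop.mpr ⟨x, fun y hy => hφm hy⟩)
  -- bundled segments
  have segcont : ∀ c : ℝ, Continuous (seg τ φ c) := fun c =>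
    hφc.comp (continuous_const.add continuous_subtype_val)
  -- key inequality
  have key : ∀ n : ℕ,
      f (seg τ φ (t - (n + 1))) + β * φ (t - (n + 1)) ≤ f (seg τ φ t) + β * φ t := by
    intro n
    have hs : (0 : ℝ) < n + 1 := by positivity
    have hmono : Monotone (fun s : Set.Icc (-τ) (0 : ℝ) =>
        Real.exp (β * s.1) * (seg τ φ t s - seg τ φ (t - (n + 1)) s)) := by
      intro s₁ s₂ hle
      have h := hφΓ (n + 1) hs (show t - (n + 1) + s₁.1 ≤ t - (n + 1) + s₂.1 by
        have : s₁.1 ≤ s₂.1 := hle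
        linarith)
      simp only at h
      have h1 : t - (n + 1) + s₁.1 + (n + 1) = t + s₁.1 := by ring
      have h2 : t - (n + 1) + s₂.1 + (n + 1) = t + s₂.1 := by ring
      rw [h1, h2] at h
      have hpos : (0 : ℝ) < Real.exp (β * ((n + 1) - t)) := Real.exp_pos _
      have := mul_le_mul_of_nonneg_left h hpos.le
      simp only [seg]
      calc Real.exp (β * s₁.1) * (φ (t + s₁.1) - φ (t - (n + 1) + s₁.1))
          = Real.exp (β * ((n + 1) - t)) *
            (Real.exp (β * (t - (n + 1) + s₁.1)) * (φ (t + s₁.1) - φ (t - (n + 1) + s₁.1))) := by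
            rw [← mul_assoc, ← Real.exp_add]; ring_nf
        _ ≤ Real.exp (β * ((n + 1) - t)) *
            (Real.exp (β * (t - (n + 1) + s₂.1)) * (φ (t + s₂.1) - φ (t - (n + 1) + s₂.1))) := this
        _ = Real.exp (β * s₂.1) * (φ (t + s₂.1) - φ (t - (n + 1) + s₂.1)) := by
            rw [← mul_assoc, ← Real.exp_add]; ring_nf
    have hbd : ∀ s : Set.Icc (-τ) (0 : ℝ),
        0 ≤ seg τ φ (t - (n + 1)) s ∧ seg τ φ (t - (n + 1)) s ≤ seg τ φ t s ∧
          seg τ φ t s ≤ K := by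
      intro s
      refine ⟨hφ0 _, hφm (by linarith [s.2.1, s.2.2] : t - (n + 1) + s.1 ≤ t + s.1), hφKb _⟩
    have h2 := hH2 (seg τ φ t) (seg τ φ (t - (n + 1))) (segcont t) (segcont _) hbd hmono
    simp only [seg, add_zero] at h2
    linarith
  -- the left-hand side tends to 0
  have htend0 : Tendsto (fun n : ℕ => φ (t - (n + 1))) atTop (nhds 0) := by
    apply hφ₀.comp
    apply tendsto_atBot_add_const_left
    rw [tendsto_neg_atBot_iff]
    exact tendsto_atTop_add_const_right _ 1 tendsto_natCast_atTop_atTop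
  have htendf : Tendsto (fun n : ℕ => f (seg τ φ (t - (n + 1)))) atTop (nhds 0) := by
    set G : ℕ → C(Set.Icc (-τ) (0 : ℝ), ℝ) :=
      fun n => ⟨seg τ φ (t - (n + 1)), segcont _⟩ with hG
    have hGt : Tendsto G atTop (nhds (ContinuousMap.const _ 0)) := by
      rw [tendsto_iff_dist_tendsto_zero]
      apply squeeze_zero (fun n => dist_nonneg) (fun n => ?_) htend0
      rw [ContinuousMap.dist_le (hφ0 _)]
      intro s
      rw [Real.dist_eq]
      simp only [hG, ContinuousMap.coe_mk, ContinuousMap.const_apply, seg, sub_zero]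
      rw [abs_of_nonneg (hφ0 _)]
      exact hφm (by linarith [s.2.2] : t - (n + 1) + s.1 ≤ t - (n + 1))
    have hz : f (0 : Set.Icc (-τ) (0 : ℝ) → ℝ) = 0 := hH1₀
    have := (hf.tendsto _).comp hGt
    simpa [hG, Function.comp_def, hz] using this
  have : Tendsto (fun n : ℕ => f (seg τ φ (t - (n + 1))) + β * φ (t - (n + 1)))
      atTop (nhds 0) := by
    have := htendf.add (htend0.const_mul β)
    simpa using this
  exact le_of_tendsto' this key
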